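/- arXiv:2111.06859 — 2 statements merged into one kernel-verified Lean document; each statement's English description precedes it below -/
import Mathlib

section
/- Let n be a fixed positive integer, q > 0, and σ ∈ (0,∞). Let V_1, V_2, … be i.i.d. real-valued random variables with 0 < E[(V_1 − ψ)²] < ∞ for a fixed ψ ∈ ℝ, and for each K ≥ 2 let T_K be a real-valued random variable on the same probability space such that √(nK)·(T_K − ψ) converges in distribution to N(0, σ²) as K → ∞. Define S²_{sec,K} = (1/(K−1))·Σ_{i=1}^K (V_i − T_K)² and W_{S,K} = √K·(T_K − ψ)/S_{sec,K}. Then P(−q ≤ W_{S,K} ≤ q) → Φ(q·√(n·E[(V_1 − ψ)²])/σ) − Φ(−q·√(n·E[(V_1 − ψ)²])/σ) as K → ∞, where Φ is the standard normal cdf; in particular the limiting coverage differs from the nominal level. -/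
open MeasureTheory ProbabilityTheory Filter

/-- Standard normal cumulative distribution function `Φ`. -/
noncomputable def stdNormalCDF (q : ℝ) : ℝ :=
  ((ProbabilityTheory.gaussianReal 0 1) (Set.Iic q)).toReal

lemma stdNormalCDF_eq_cdf : stdNormalCDF = cdf (gaussianReal 0 1) := by
  funext x
  rw [stdNormalCDF, cdf_eq_real, measureReal_def]

lemma gaussian_singleton (x : ℝ) : (gaussianReal 0 1) {x} = 0 :=
  (gaussianReal_absolutelyContinuous 0 one_ne_zero) (Real.volume_singleton)

lemma continuous_stdNormalCDF : Continuous stdNormalCDF := by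
  rw [stdNormalCDF_eq_cdf]
  rw [continuous_iff_continuousAt]
  intro x
  rw [(cdf (gaussianReal 0 1)).mono.continuousAt_iff_leftLim_eq_rightLim,
    StieltjesFunction.rightLim_eq]
  have h := (cdf (gaussianReal 0 1)).measure_singleton x
  rw [measure_cdf, gaussian_singleton] at h
  have h2 : cdf (gaussianReal 0 1) x - Function.leftLim (cdf (gaussianReal 0 1)) x ≤ 0 :=
    ENNReal.ofReal_eq_zero.mp h.symm
  have h3 := (cdf (gaussianReal 0 1)).mono.leftLim_le (le_refl x)
  linarith
lemma tendsto_stdNormalCDF_atTop : Tendsto stdNormalCDF atTop (nhds 1) := by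
  rw [stdNormalCDF_eq_cdf]; exact tendsto_cdf_atTop _
lemma tendsto_stdNormalCDF_atBot : Tendsto stdNormalCDF atBot (nhds 0) := by
  rw [stdNormalCDF_eq_cdf]; exact tendsto_cdf_atBot _

section TIM
variable {Ω : Type*} [MeasurableSpace Ω] {μ : Measure Ω}

/-- Deterministic sequences converge in measure. -/
lemma tim_const {r : ℕ → ℝ} {c : ℝ} (hr : Tendsto r atTop (nhds c)) :
    TendstoInMeasure μ (fun K _ => r K) atTop (fun _ => c) := by
  rw [tendstoInMeasure_iff_dist]
  intro ε hε
  have h : ∀ᶠ K in atTop, (μ {ω | ε ≤ dist (r K) c}) = 0 := by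
    obtain ⟨N, hN⟩ := Metric.tendsto_atTop.mp hr ε hε
    filter_upwards [eventually_ge_atTop N] with K hK
    have : {ω : Ω | ε ≤ dist (r K) c} = ∅ := by
      ext ω; simp only [Set.mem_setOf_eq, Set.mem_empty_iff_false, iff_false, not_le]
      exact hN K hK
    simp [this]
  exact Tendsto.congr' (h.mono fun K hK => hK.symm) tendsto_const_nhds

/-- Composition of convergence in measure to constants with a continuous function. -/
lemma tim_comp2 {X Y : ℕ → Ω → ℝ} {a b : ℝ}
    (hX : TendstoInMeasure μ X atTop (fun _ => a))
    (hY : TendstoInMeasure μ Y atTop (fun _ => b))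
    {f : ℝ → ℝ → ℝ} (hf : ContinuousAt (fun p : ℝ × ℝ => f p.1 p.2) (a, b)) :
    TendstoInMeasure μ (fun K ω => f (X K ω) (Y K ω)) atTop (fun _ => f a b) := by
  rw [tendstoInMeasure_iff_dist]
  intro ε hε
  obtain ⟨δ, hδ, hδf⟩ := Metric.continuousAt_iff.mp hf ε hε
  have hsub : ∀ K, {ω | ε ≤ dist (f (X K ω) (Y K ω)) (f a b)}
      ⊆ {ω | δ ≤ dist (X K ω) a} ∪ {ω | δ ≤ dist (Y K ω) b} := by
    intro K ω hω
    by_contra hc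
    simp only [Set.mem_union, Set.mem_setOf_eq, not_or, not_le] at hc
    have : dist ((X K ω, Y K ω)) ((a, b)) < δ := by
      rw [Prod.dist_eq]; exact max_lt hc.1 hc.2
    exact absurd (hδf this) (not_lt.mpr hω)
  have h0 : Tendsto (fun K => μ {ω | δ ≤ dist (X K ω) a} + μ {ω | δ ≤ dist (Y K ω) b})
      atTop (nhds 0) := by
    have := Tendsto.add (tendstoInMeasure_iff_dist.mp hX δ hδ) (tendstoInMeasure_iff_dist.mp hY δ hδ)
    simpa using this
  refine tendsto_of_tendsto_of_tendsto_of_le_of_le tendsto_const_nhds h0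
    (fun K => zero_le) (fun K => ?_)
  exact le_trans (measure_mono (hsub K)) (measure_union_le _ _)

end TIM


lemma toReal_compl_prob {Ω : Type*} [MeasurableSpace Ω] (μ : Measure Ω)
    [IsProbabilityMeasure μ] {s : Set Ω} (hs : MeasurableSet s) :
    (μ sᶜ).toReal = 1 - (μ s).toReal := by
  rw [prob_compl_eq_one_sub hs, ENNReal.toReal_sub_of_le prob_le_one ENNReal.one_ne_top]
  simp

/-- The sectioning statistic `W_{S,K} = √K (T_K - ψ) / S_{sec,K}` built from the batch
estimators `V_0, …, V_{K-1}` and the full-data estimator `T_K`. -/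
noncomputable def WSK {Ω : Type*} (V : ℕ → Ω → ℝ) (T : ℕ → Ω → ℝ) (ψ : ℝ)
    (K : ℕ) (ω : Ω) : ℝ :=
  Real.sqrt K * (T K ω - ψ) /
    Real.sqrt (((K : ℝ) - 1)⁻¹ * ∑ i ∈ Finset.range K, (V i ω - T K ω) ^ 2)

set_option maxHeartbeats 2000000 in
/-- **Asymptotic coverage of sectioning as the number of batches grows (Theorem 7,
sectioning part).** With the batch size `n` fixed, if the i.i.d. batch estimators `V_i`
satisfy `0 < E[(V₁ - ψ)²] < ∞` and the full-data estimator satisfies the CLT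
`√(nK)(T_K - ψ) ⇒ N(0, σ²)`, then the coverage of the symmetric sectioning CI tends to
`Φ(q √(n E[(V₁-ψ)²]) / σ) - Φ(-q √(n E[(V₁-ψ)²]) / σ)` as `K → ∞`. -/
theorem sectioning_coverage_limit
    {Ω : Type*} [MeasurableSpace Ω] (μ : Measure Ω) [IsProbabilityMeasure μ]
    (n : ℕ) (hn : 1 ≤ n) (q : ℝ) (hq : 0 < q) (σ : ℝ) (hσ : 0 < σ) (ψ : ℝ)
    (V : ℕ → Ω → ℝ) (T : ℕ → Ω → ℝ)
    (hmeasV : ∀ i, Measurable (V i))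
    (hmeasT : ∀ K, Measurable (T K))
    (hindep : iIndepFun V μ)
    (hident : ∀ i, IdentDistrib (V i) (V 0) μ μ)
    (hint2 : Integrable (fun ω => (V 0 ω - ψ) ^ 2) μ)
    (hpos : 0 < ∫ ω, (V 0 ω - ψ) ^ 2 ∂μ)
    (hCLT : ∀ x : ℝ,
      Tendsto (fun K : ℕ =>
          (μ {ω | Real.sqrt ((n : ℝ) * K) * (T K ω - ψ) ≤ x}).toReal)
        atTop (nhds (stdNormalCDF (x / σ)))) :
    Tendsto (fun K : ℕ => (μ {ω | WSK V T ψ K ω ∈ Set.Icc (-q) q}).toReal)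
      atTop
      (nhds (stdNormalCDF (q * Real.sqrt ((n : ℝ) * ∫ ω, (V 0 ω - ψ) ^ 2 ∂μ) / σ)
        - stdNormalCDF (-(q * Real.sqrt ((n : ℝ) * ∫ ω, (V 0 ω - ψ) ^ 2 ∂μ) / σ)))) := by
  set v : ℝ := ∫ ω, (V 0 ω - ψ) ^ 2 ∂μ with hv_def
  set A : ℕ → Ω → ℝ := fun K ω => Real.sqrt K * (T K ω - ψ) with hA_def
  set B : ℕ → Ω → ℝ :=
    fun K ω => ((K : ℝ) - 1)⁻¹ * ∑ i ∈ Finset.range K, (V i ω - T K ω) ^ 2 with hB_def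
  have hn0 : (0:ℝ) < n := by exact_mod_cast Nat.lt_of_lt_of_le Nat.zero_lt_one hn
  have hsqn : (0:ℝ) < Real.sqrt n := Real.sqrt_pos.mpr hn0
  -- Step A : CDF convergence for A K
  have hA : ∀ x : ℝ, Tendsto (fun K => (μ {ω | A K ω ≤ x}).toReal) atTop
      (nhds (stdNormalCDF (x * Real.sqrt n / σ))) := by
    intro x
    have h := hCLT (Real.sqrt n * x)
    have hset : ∀ K : ℕ, {ω | Real.sqrt ((n : ℝ) * K) * (T K ω - ψ) ≤ Real.sqrt n * x}
        = {ω | A K ω ≤ x} := by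
      intro K
      ext ω
      simp only [Set.mem_setOf_eq, hA_def]
      rw [Real.sqrt_mul (Nat.cast_nonneg n), mul_assoc]
      exact mul_le_mul_iff_right₀ hsqn
    have heq : (fun K : ℕ => (μ {ω | Real.sqrt ((n : ℝ) * K) * (T K ω - ψ)
        ≤ Real.sqrt n * x}).toReal) = fun K => (μ {ω | A K ω ≤ x}).toReal := by
      funext K; rw [hset K]
    rw [heq] at h
    have : Real.sqrt n * x / σ = x * Real.sqrt n / σ := by ring
    rwa [this] at h
  -- Step B : T K - ψ tends to 0 in probability
  have htP : TendstoInMeasure μ (fun K ω => T K ω - ψ) atTop (fun _ => (0:ℝ)) := by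
    rw [tendstoInMeasure_iff_dist]
    intro δ hδ
    have hfin : ∀ K, μ {ω | δ ≤ dist (T K ω - ψ) 0} ≠ ⊤ := fun K => measure_ne_top μ _
    have key : Tendsto (fun K => (μ {ω | δ ≤ dist (T K ω - ψ) 0}).toReal) atTop (nhds 0) := by
      rw [NormedAddCommGroup.tendsto_nhds_zero]
      intro c hc
      -- choose M with good tails
      obtain ⟨M, hM1, hM2⟩ : ∃ M : ℝ, 1 - c/4 < stdNormalCDF ((M - 1)/σ)
          ∧ stdNormalCDF (-M/σ) < c/4 := by
        have h1 : Tendsto (fun M : ℝ => stdNormalCDF ((M - 1)/σ)) atTop (nhds 1) :=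
          tendsto_stdNormalCDF_atTop.comp
            (Tendsto.atTop_div_const hσ (tendsto_atTop_add_const_right _ _ tendsto_id))
        have h2 : Tendsto (fun M : ℝ => stdNormalCDF (-M/σ)) atTop (nhds 0) :=
          tendsto_stdNormalCDF_atBot.comp
            (Tendsto.atBot_div_const hσ tendsto_neg_atTop_atBot)
        have e1 := h1.eventually (eventually_gt_nhds (by linarith : 1 - c/4 < 1))
        have e2 := h2.eventually (eventually_lt_nhds (by linarith : (0:ℝ) < c/4))
        obtain ⟨M, hM⟩ := (e1.and e2).exists
        exact ⟨M, hM.1, hM.2⟩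
      have hF1 := (hCLT (M - 1)).eventually (eventually_gt_nhds (by linarith :
        1 - c/3 < stdNormalCDF ((M-1)/σ)))
      have hF2 := (hCLT (-M)).eventually (eventually_lt_nhds (by linarith :
        stdNormalCDF (-M/σ) < c/3))
      have hKlarge : ∀ᶠ K : ℕ in atTop, M ≤ Real.sqrt ((n:ℝ) * K) * δ := by
        have hh : Tendsto (fun K : ℕ => Real.sqrt ((n:ℝ) * K) * δ) atTop atTop := by
          apply Tendsto.atTop_mul_const hδ
          have hsqrtT : Tendsto Real.sqrt atTop atTop := by
            rw [tendsto_atTop_atTop]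
            intro b
            exact ⟨b^2, fun a ha => le_trans (le_abs_self b)
              (by rw [← Real.sqrt_sq_eq_abs]; exact Real.sqrt_le_sqrt ha)⟩
          exact hsqrtT.comp (Tendsto.const_mul_atTop hn0 tendsto_natCast_atTop_atTop)
        exact hh.eventually_ge_atTop M
      filter_upwards [hF1, hF2, hKlarge] with K h1 h2 h3
      have hsub : {ω | δ ≤ dist (T K ω - ψ) 0} ⊆
          {ω | Real.sqrt ((n:ℝ)*K) * (T K ω - ψ) ≤ M - 1}ᶜ
          ∪ {ω | Real.sqrt ((n:ℝ)*K) * (T K ω - ψ) ≤ -M} := by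
        intro ω hω
        simp only [Set.mem_setOf_eq, Real.dist_eq, sub_zero] at hω
        have hs : (0:ℝ) ≤ Real.sqrt ((n:ℝ)*K) := Real.sqrt_nonneg _
        rcases le_abs.mp hω with h | h
        · -- δ ≤ T K ω - ψ
          left
          simp only [Set.mem_compl_iff, Set.mem_setOf_eq, not_le]
          have : Real.sqrt ((n:ℝ)*K) * δ ≤ Real.sqrt ((n:ℝ)*K) * (T K ω - ψ) :=
            mul_le_mul_of_nonneg_left h hs
          linarith
        · -- T K ω - ψ ≤ -δ
          right
          simp only [Set.mem_setOf_eq]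
          have : Real.sqrt ((n:ℝ)*K) * (T K ω - ψ) ≤ Real.sqrt ((n:ℝ)*K) * (-δ) :=
            mul_le_mul_of_nonneg_left (by linarith) hs
          linarith [this, h3]
      have hmeas1 : MeasurableSet {ω | Real.sqrt ((n:ℝ)*K) * (T K ω - ψ) ≤ M - 1} :=
        measurableSet_le (((hmeasT K).sub_const ψ).const_mul _) measurable_const
      have hb : (μ {ω | δ ≤ dist (T K ω - ψ) 0}).toReal ≤
          (μ ({ω | Real.sqrt ((n:ℝ)*K) * (T K ω - ψ) ≤ M - 1}ᶜ)).toReal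
          + (μ {ω | Real.sqrt ((n:ℝ)*K) * (T K ω - ψ) ≤ -M}).toReal := by
        rw [← ENNReal.toReal_add (measure_ne_top μ _) (measure_ne_top μ _)]
        exact ENNReal.toReal_mono
          (by exact ENNReal.add_ne_top.mpr ⟨measure_ne_top μ _, measure_ne_top μ _⟩)
          (le_trans (measure_mono hsub) (measure_union_le _ _))
      rw [Real.norm_eq_abs, abs_of_nonneg ENNReal.toReal_nonneg]
      have hcompl : (μ ({ω | Real.sqrt ((n:ℝ)*K) * (T K ω - ψ) ≤ M - 1}ᶜ)).toReal
          = 1 - (μ {ω | Real.sqrt ((n:ℝ)*K) * (T K ω - ψ) ≤ M - 1}).toReal := by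
        exact toReal_compl_prob μ hmeas1
      rw [hcompl] at hb
      calc (μ {ω | δ ≤ dist (T K ω - ψ) 0}).toReal
          ≤ 1 - (μ {ω | Real.sqrt ((n:ℝ)*K) * (T K ω - ψ) ≤ M - 1}).toReal
            + (μ {ω | Real.sqrt ((n:ℝ)*K) * (T K ω - ψ) ≤ -M}).toReal := hb
        _ < c := by linarith
    -- convert real to ENNReal convergence
    have := ENNReal.tendsto_ofReal key
    rw [ENNReal.ofReal_zero] at this
    refine Tendsto.congr (fun K => ?_) this
    exact ENNReal.ofReal_toReal (hfin K)
  -- Step C : strong law of large numbers pieces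
  set m : ℝ := ∫ ω, (V 0 ω - ψ) ∂μ with hm_def
  have hg2 : Measurable (fun x : ℝ => (x - ψ)^2) := (measurable_id.sub_const ψ).pow_const 2
  have hg1 : Measurable (fun x : ℝ => x - ψ) := measurable_id.sub_const ψ
  have hint1 : Integrable (fun ω => V 0 ω - ψ) μ := by
    have hmm : AEStronglyMeasurable (fun ω => V 0 ω - ψ) μ :=
      ((hmeasV 0).sub_const ψ).aestronglyMeasurable
    exact ((memLp_two_iff_integrable_sq hmm).mpr hint2).integrable one_le_two
  have hae2 := strong_law_ae_real (fun i ω => (V i ω - ψ)^2) hint2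
    (fun i j hij => (hindep.comp (fun _ => fun x : ℝ => (x - ψ)^2) (fun _ => hg2)).indepFun hij)
    (fun i => (hident i).comp hg2)
  have hae1 := strong_law_ae_real (fun i ω => V i ω - ψ) hint1
    (fun i j hij => (hindep.comp (fun _ => fun x : ℝ => x - ψ) (fun _ => hg1)).indepFun hij)
    (fun i => (hident i).comp hg1)
  have hS2 : TendstoInMeasure μ
      (fun K ω => (∑ i ∈ Finset.range K, (V i ω - ψ)^2)/K) atTop (fun _ => v) := by
    refine tendstoInMeasure_of_tendsto_ae (fun K => ?_) hae2
    exact ((Finset.measurable_sum _ (fun i _ => ((hmeasV i).sub_const ψ).pow_const 2)).div_const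
      _).aestronglyMeasurable
  have hS1 : TendstoInMeasure μ
      (fun K ω => (∑ i ∈ Finset.range K, (V i ω - ψ))/K) atTop (fun _ => m) := by
    refine tendstoInMeasure_of_tendsto_ae (fun K => ?_) hae1
    exact ((Finset.measurable_sum _ (fun i _ => (hmeasV i).sub_const ψ)).div_const
      _).aestronglyMeasurable
  -- Step D : B tends to v in probability
  have hc : Tendsto (fun K : ℕ => (K:ℝ)/((K:ℝ)-1)) atTop (nhds 1) := by
    have h0 : Tendsto (fun K : ℕ => ((K:ℝ)-1)⁻¹) atTop (nhds 0) :=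
      Tendsto.inv_tendsto_atTop
        (tendsto_atTop_add_const_right _ (-1) tendsto_natCast_atTop_atTop)
    have h1 : Tendsto (fun K : ℕ => 1 + ((K:ℝ)-1)⁻¹) atTop (nhds 1) := by
      simpa using tendsto_const_nhds.add h0
    refine Tendsto.congr' ?_ h1
    filter_upwards [eventually_ge_atTop 2] with K hK
    have hK1 : (0:ℝ) < (K:ℝ) - 1 := by
      have : (2:ℝ) ≤ (K:ℝ) := by exact_mod_cast hK
      linarith
    field_simp
    ring
  have hmulCA : ContinuousAt (fun p : ℝ × ℝ => p.1 * p.2) ((0:ℝ), m) := continuous_mul.continuousAt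
  have hP1 := tim_comp2 htP hS1 (f := fun a b => a * b) continuous_mul.continuousAt
  have hP2 := tim_comp2 htP htP (f := fun a b => a * b) continuous_mul.continuousAt
  have hP3 := tim_comp2 hS2 hP1 (f := fun a b => a - 2*b)
    ((continuous_fst.sub (continuous_const.mul continuous_snd)).continuousAt)
  have hP4 := tim_comp2 hP3 hP2 (f := fun a b => a + b) continuous_add.continuousAt
  have hP5 := tim_comp2 (tim_const hc) hP4 (f := fun a b => a * b) continuous_mul.continuousAt
  have hBv : TendstoInMeasure μ B atTop (fun _ => v) := by
    have hgval : (fun _ : Ω => (1:ℝ) * ((v - 2*((0:ℝ)*m)) + 0*0)) = fun _ => v :=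
      funext fun _ => by ring
    refine TendstoInMeasure.congr' ?_ (by rw [hgval]) hP5
    filter_upwards [eventually_ge_atTop 2] with K hK
    refine Filter.Eventually.of_forall (fun ω => ?_)
    have hK0 : (0:ℝ) < (K:ℝ) := by positivity
    have hK1 : (0:ℝ) < (K:ℝ) - 1 := by
      have : (2:ℝ) ≤ (K:ℝ) := by exact_mod_cast hK
      linarith
    show (K:ℝ)/((K:ℝ)-1) * _ = B K ω
    rw [hB_def]
    simp only []
    have hterm : ∀ i ∈ Finset.range K, (V i ω - T K ω)^2
        = ((V i ω - ψ)^2 - 2*(T K ω - ψ)*(V i ω - ψ)) + (T K ω - ψ)^2 :=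
      fun i _ => by ring
    have hsum : ∑ i ∈ Finset.range K, (V i ω - T K ω)^2
        = (∑ i ∈ Finset.range K, (V i ω - ψ)^2)
          - 2*(T K ω - ψ) * (∑ i ∈ Finset.range K, (V i ω - ψ))
          + (K:ℝ) * (T K ω - ψ)^2 := by
      rw [Finset.sum_congr rfl hterm, Finset.sum_add_distrib, Finset.sum_sub_distrib,
        Finset.mul_sum, Finset.sum_const, Finset.card_range, nsmul_eq_mul]
    rw [hsum]
    field_simp
  -- Step E : sandwich argument
  set F : ℝ → ℝ := fun x => stdNormalCDF (x * Real.sqrt n / σ) with hF_def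
  have hFcont : Continuous F :=
    continuous_stdNormalCDF.comp ((continuous_id.mul continuous_const).div_const σ)
  have hvpos : (0:ℝ) < v := hpos
  set c : ℕ → ℝ := fun K => (μ {ω | WSK V T ψ K ω ∈ Set.Icc (-q) q}).toReal with hc_def
  have hc1 : ∀ K, c K ≤ 1 := fun K => by
    simpa using ENNReal.toReal_mono ENNReal.one_ne_top prob_le_one
  have hc0 : ∀ K, 0 ≤ c K := fun K => ENNReal.toReal_nonneg
  have hmeasA : ∀ K x, MeasurableSet {ω | A K ω ≤ x} := fun K x =>
    measurableSet_le (((hmeasT K).sub_const ψ).const_mul _) measurable_const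
  have hWeq : ∀ K ω, WSK V T ψ K ω = A K ω / Real.sqrt (B K ω) := fun K ω => rfl
  have hE0 : ∀ ε : ℝ, 0 < ε →
      Tendsto (fun K => (μ {ω | ε ≤ dist (B K ω) v}).toReal) atTop (nhds 0) := by
    intro ε hε
    have h := tendstoInMeasure_iff_dist.mp hBv ε hε
    have h2 := (ENNReal.tendsto_toReal (by simp : (0:ENNReal) ≠ ⊤)).comp h
    simpa [Function.comp_def] using h2
  -- upper bound on limsup
  have key_up : ∀ ε : ℝ, 0 < ε → ε < v →
      Filter.limsup c atTop ≤ F (q*Real.sqrt (v+ε)) - F (-(q*Real.sqrt (v+2*ε))) := by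
    intro ε hε hεv
    set b : ℝ := q*Real.sqrt (v+ε) with hb_def
    set a : ℝ := -(q*Real.sqrt (v+2*ε)) with ha_def
    have hsqpos : 0 < Real.sqrt (v+ε) := Real.sqrt_pos.mpr (by linarith)
    have hsq2pos : 0 < Real.sqrt (v+2*ε) := Real.sqrt_pos.mpr (by linarith)
    have hab : a ≤ b := by
      have : 0 < b := mul_pos hq hsqpos
      have : a < 0 := neg_neg_iff_pos.mpr (mul_pos hq hsq2pos)
      linarith
    have hsub : ∀ K, {ω | WSK V T ψ K ω ∈ Set.Icc (-q) q} ⊆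
        (({ω | A K ω ≤ b} \ {ω | A K ω ≤ a}) ∪ {ω | ε ≤ dist (B K ω) v}) := by
      intro K ω hω
      by_cases hEω : ε ≤ dist (B K ω) v
      · exact Set.mem_union_right _ hEω
      · left
        push_neg at hEω
        rw [Real.dist_eq, abs_lt] at hEω
        have hBpos : 0 < B K ω := by linarith
        have hsB : 0 < Real.sqrt (B K ω) := Real.sqrt_pos.mpr hBpos
        obtain ⟨h1, h2⟩ := hω
        rw [hWeq K ω] at h1 h2
        have hAle : A K ω ≤ q * Real.sqrt (B K ω) := (div_le_iff₀ hsB).mp h2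
        have hAge : -q * Real.sqrt (B K ω) ≤ A K ω := (le_div_iff₀ hsB).mp h1
        have hsle : Real.sqrt (B K ω) ≤ Real.sqrt (v+ε) := Real.sqrt_le_sqrt (by linarith)
        have hslt : Real.sqrt (v+ε) < Real.sqrt (v+2*ε) :=
          Real.sqrt_lt_sqrt (by linarith) (by linarith)
        constructor
        · exact le_trans hAle (mul_le_mul_of_nonneg_left hsle hq.le)
        · simp only [Set.mem_setOf_eq, not_le, ha_def]
          nlinarith
    have hcd : ∀ K, c K ≤ ((μ {ω | A K ω ≤ b}).toReal - (μ {ω | A K ω ≤ a}).toReal)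
        + (μ {ω | ε ≤ dist (B K ω) v}).toReal := by
      intro K
      have hYX : {ω | A K ω ≤ a} ⊆ {ω | A K ω ≤ b} := fun ω h => le_trans h hab
      have hdiff : (μ ({ω | A K ω ≤ b} \ {ω | A K ω ≤ a})).toReal
          = (μ {ω | A K ω ≤ b}).toReal - (μ {ω | A K ω ≤ a}).toReal := by
        rw [measure_diff hYX (hmeasA K a).nullMeasurableSet (measure_ne_top μ _),
          ENNReal.toReal_sub_of_le (measure_mono hYX) (measure_ne_top μ _)]
      calc c K ≤ (μ (({ω | A K ω ≤ b} \ {ω | A K ω ≤ a})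
            ∪ {ω | ε ≤ dist (B K ω) v})).toReal :=
          ENNReal.toReal_mono (measure_ne_top μ _) (measure_mono (hsub K))
        _ ≤ (μ ({ω | A K ω ≤ b} \ {ω | A K ω ≤ a})).toReal
            + (μ {ω | ε ≤ dist (B K ω) v}).toReal := by
          rw [← ENNReal.toReal_add (measure_ne_top μ _) (measure_ne_top μ _)]
          exact ENNReal.toReal_mono
            (ENNReal.add_ne_top.mpr ⟨measure_ne_top μ _, measure_ne_top μ _⟩)
            (measure_union_le _ _)
        _ = _ := by rw [hdiff]
    have hd : Tendsto (fun K => ((μ {ω | A K ω ≤ b}).toReal - (μ {ω | A K ω ≤ a}).toReal)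
        + (μ {ω | ε ≤ dist (B K ω) v}).toReal) atTop (nhds ((F b - F a) + 0)) :=
      ((hA b).sub (hA a)).add (hE0 ε hε)
    calc Filter.limsup c atTop ≤ Filter.limsup (fun K =>
          ((μ {ω | A K ω ≤ b}).toReal - (μ {ω | A K ω ≤ a}).toReal)
          + (μ {ω | ε ≤ dist (B K ω) v}).toReal) atTop :=
        limsup_le_limsup (Filter.Eventually.of_forall hcd)
          ((isBoundedUnder_of ⟨0, hc0⟩).isCoboundedUnder_le) hd.isBoundedUnder_le
      _ = (F b - F a) + 0 := hd.limsup_eq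
      _ = F b - F a := add_zero _
  -- lower bound on liminf
  have key_lo : ∀ ε : ℝ, 0 < ε → ε < v →
      F (q*Real.sqrt (v-ε)) - F (-(q*Real.sqrt (v-ε))) ≤ Filter.liminf c atTop := by
    intro ε hε hεv
    set b : ℝ := q*Real.sqrt (v-ε) with hb_def
    set a : ℝ := -(q*Real.sqrt (v-ε)) with ha_def
    have hsqpos : 0 < Real.sqrt (v-ε) := Real.sqrt_pos.mpr (by linarith)
    have hab : a ≤ b := by
      have : 0 < b := mul_pos hq hsqpos
      linarith [hb_def]
    have hsub : ∀ K, ({ω | A K ω ≤ b} \ {ω | A K ω ≤ a}) ⊆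
        ({ω | WSK V T ψ K ω ∈ Set.Icc (-q) q} ∪ {ω | ε ≤ dist (B K ω) v}) := by
      intro K ω hω
      by_cases hEω : ε ≤ dist (B K ω) v
      · exact Set.mem_union_right _ hEω
      · left
        push_neg at hEω
        rw [Real.dist_eq, abs_lt] at hEω
        have hBpos : 0 < B K ω := by linarith
        have hsB : 0 < Real.sqrt (B K ω) := Real.sqrt_pos.mpr hBpos
        obtain ⟨h1, h2⟩ := hω
        simp only [Set.mem_setOf_eq, not_le] at h1 h2
        have hsle : Real.sqrt (v-ε) ≤ Real.sqrt (B K ω) := Real.sqrt_le_sqrt (by linarith)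
        have hqs : q * Real.sqrt (v-ε) ≤ q * Real.sqrt (B K ω) :=
          mul_le_mul_of_nonneg_left hsle hq.le
        rw [Set.mem_setOf_eq, hWeq K ω, Set.mem_Icc]
        constructor
        · rw [le_div_iff₀ hsB]
          nlinarith
        · rw [div_le_iff₀ hsB]
          nlinarith
    have hcd : ∀ K, ((μ {ω | A K ω ≤ b}).toReal - (μ {ω | A K ω ≤ a}).toReal)
        - (μ {ω | ε ≤ dist (B K ω) v}).toReal ≤ c K := by
      intro K
      have hYX : {ω | A K ω ≤ a} ⊆ {ω | A K ω ≤ b} := fun ω h => le_trans h hab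
      have hdiff : (μ ({ω | A K ω ≤ b} \ {ω | A K ω ≤ a})).toReal
          = (μ {ω | A K ω ≤ b}).toReal - (μ {ω | A K ω ≤ a}).toReal := by
        rw [measure_diff hYX (hmeasA K a).nullMeasurableSet (measure_ne_top μ _),
          ENNReal.toReal_sub_of_le (measure_mono hYX) (measure_ne_top μ _)]
      have h2 : (μ ({ω | A K ω ≤ b} \ {ω | A K ω ≤ a})).toReal ≤
          c K + (μ {ω | ε ≤ dist (B K ω) v}).toReal := by
        calc (μ ({ω | A K ω ≤ b} \ {ω | A K ω ≤ a})).toReal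
            ≤ (μ ({ω | WSK V T ψ K ω ∈ Set.Icc (-q) q}
              ∪ {ω | ε ≤ dist (B K ω) v})).toReal :=
            ENNReal.toReal_mono (measure_ne_top μ _) (measure_mono (hsub K))
          _ ≤ c K + (μ {ω | ε ≤ dist (B K ω) v}).toReal := by
            rw [← ENNReal.toReal_add (measure_ne_top μ _) (measure_ne_top μ _)]
            exact ENNReal.toReal_mono
              (ENNReal.add_ne_top.mpr ⟨measure_ne_top μ _, measure_ne_top μ _⟩)
              (measure_union_le _ _)
      linarith [hdiff ▸ h2]
    have he : Tendsto (fun K => ((μ {ω | A K ω ≤ b}).toReal - (μ {ω | A K ω ≤ a}).toReal)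
        - (μ {ω | ε ≤ dist (B K ω) v}).toReal) atTop (nhds ((F b - F a) - 0)) :=
      ((hA b).sub (hA a)).sub (hE0 ε hε)
    calc F b - F a = (F b - F a) - 0 := (sub_zero _).symm
      _ = Filter.liminf (fun K => ((μ {ω | A K ω ≤ b}).toReal
            - (μ {ω | A K ω ≤ a}).toReal)
            - (μ {ω | ε ≤ dist (B K ω) v}).toReal) atTop := he.liminf_eq.symm
      _ ≤ Filter.liminf c atTop :=
        liminf_le_liminf (Filter.Eventually.of_forall hcd)
          he.isBoundedUnder_ge ((isBoundedUnder_of ⟨1, hc1⟩).isCoboundedUnder_ge)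
  -- combine
  have harg : q * Real.sqrt ((n : ℝ) * v) / σ = (q * Real.sqrt v) * Real.sqrt (n:ℝ) / σ := by
    rw [Real.sqrt_mul (Nat.cast_nonneg n)]; ring
  have harg2 : -(q * Real.sqrt ((n : ℝ) * v) / σ)
      = (-(q * Real.sqrt v)) * Real.sqrt (n:ℝ) / σ := by
    rw [Real.sqrt_mul (Nat.cast_nonneg n)]; ring
  have htarget : stdNormalCDF (q * Real.sqrt ((n : ℝ) * v) / σ) = F (q * Real.sqrt v) := by
    rw [harg]
  have htarget2 : stdNormalCDF (-(q * Real.sqrt ((n : ℝ) * v) / σ))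
      = F (-(q * Real.sqrt v)) := by
    rw [harg2]
  rw [htarget, htarget2]
  set L : ℝ := F (q * Real.sqrt v) - F (-(q * Real.sqrt v)) with hL_def
  have hεseq : Tendsto (fun j : ℕ => v/((j:ℝ)+2)) atTop (nhds 0) := by
    apply Tendsto.div_atTop tendsto_const_nhds
    exact tendsto_atTop_add_const_right _ 2 tendsto_natCast_atTop_atTop
  have hεpos : ∀ j : ℕ, 0 < v/((j:ℝ)+2) := fun j => by positivity
  have hεlt : ∀ j : ℕ, v/((j:ℝ)+2) < v := fun j => by
    rw [div_lt_iff₀ (by positivity)]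
    nlinarith [hvpos, (Nat.cast_nonneg j : (0:ℝ) ≤ j)]
  have hcontup : Continuous (fun t : ℝ =>
      F (q*Real.sqrt (v+t)) - F (-(q*Real.sqrt (v+2*t)))) := by
    apply Continuous.sub
    · exact hFcont.comp (continuous_const.mul
        (Real.continuous_sqrt.comp (continuous_const.add continuous_id)))
    · exact hFcont.comp (continuous_neg.comp (continuous_const.mul
        (Real.continuous_sqrt.comp (continuous_const.add (continuous_const.mul continuous_id)))))
  have hcontlo : Continuous (fun t : ℝ =>
      F (q*Real.sqrt (v-t)) - F (-(q*Real.sqrt (v-t)))) := by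
    apply Continuous.sub
    · exact hFcont.comp (continuous_const.mul
        (Real.continuous_sqrt.comp (continuous_const.sub continuous_id)))
    · exact hFcont.comp (continuous_neg.comp (continuous_const.mul
        (Real.continuous_sqrt.comp (continuous_const.sub continuous_id))))
  have hUup : Tendsto (fun j : ℕ => F (q*Real.sqrt (v+v/((j:ℝ)+2)))
      - F (-(q*Real.sqrt (v+2*(v/((j:ℝ)+2)))))) atTop (nhds L) := by
    have := (hcontup.tendsto 0).comp hεseq
    simpa [hL_def, Function.comp_def] using this
  have hUlo : Tendsto (fun j : ℕ => F (q*Real.sqrt (v-v/((j:ℝ)+2)))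
      - F (-(q*Real.sqrt (v-v/((j:ℝ)+2))))) atTop (nhds L) := by
    have := (hcontlo.tendsto 0).comp hεseq
    simpa [hL_def, Function.comp_def] using this
  have hsup : Filter.limsup c atTop ≤ L :=
    ge_of_tendsto' hUup (fun j => key_up _ (hεpos j) (hεlt j))
  have hinf : L ≤ Filter.liminf c atTop :=
    le_of_tendsto' hUlo (fun j => key_lo _ (hεpos j) (hεlt j))
  exact tendsto_of_le_liminf_of_limsup_le hinf hsup
    (isBoundedUnder_of ⟨1, hc1⟩) (isBoundedUnder_of ⟨0, hc0⟩)
end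

section
/- For every real q > 1 the following strict chain of inequalities holds between the leading coverage-error coefficients of the four batching methods in the K = 2 normal example: −4q/(π(q²+1)) < −4q⁵/(π(q²+1)³) < −4q⁵/(π(q²+1)³) + q/(π(q²+1)²) < −4q(q²−1)²/(π(q²+1)³) < 0. (These four quantities are, respectively, the sectioned-jackknife, sectioning–batching, sectioning, and batching coefficients of the n^{−1} coverage-error term, up to the common positive factor λ².) -/
/-- **Strict ordering of the leading coverage-error coefficients in the `K = 2`
normal example.** For `q > 1`, the sectioned-jackknife, sectioning-batching,
sectioning and batching coefficients of the `n⁻¹` coverage-error term satisfy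
`SJ < SB < S < B < 0`. -/
theorem coverage_error_coefficients_ordering (q : ℝ) (hq : 1 < q) :
    -(4 : ℝ) * q / (Real.pi * (q ^ 2 + 1))
        < -(4 : ℝ) * q ^ 5 / (Real.pi * (q ^ 2 + 1) ^ 3) ∧
    -(4 : ℝ) * q ^ 5 / (Real.pi * (q ^ 2 + 1) ^ 3)
        < -(4 : ℝ) * q ^ 5 / (Real.pi * (q ^ 2 + 1) ^ 3)
            + q / (Real.pi * (q ^ 2 + 1) ^ 2) ∧
    -(4 : ℝ) * q ^ 5 / (Real.pi * (q ^ 2 + 1) ^ 3)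
            + q / (Real.pi * (q ^ 2 + 1) ^ 2)
        < -(4 : ℝ) * q * (q ^ 2 - 1) ^ 2 / (Real.pi * (q ^ 2 + 1) ^ 3) ∧
    -(4 : ℝ) * q * (q ^ 2 - 1) ^ 2 / (Real.pi * (q ^ 2 + 1) ^ 3) < 0 := by
  have hpi := Real.pi_pos
  have hq0 : (0 : ℝ) < q := lt_trans one_pos hq
  have hD : (0 : ℝ) < q ^ 2 + 1 := by positivity
  have hP1 : (0 : ℝ) < Real.pi * (q ^ 2 + 1) := by positivity
  have hP2 : (0 : ℝ) < Real.pi * (q ^ 2 + 1) ^ 2 := by positivity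
  have hP3 : (0 : ℝ) < Real.pi * (q ^ 2 + 1) ^ 3 := by positivity
  refine ⟨?_, ?_, ?_, ?_⟩
  · rw [div_lt_div_iff₀ hP1 hP3]
    nlinarith [mul_pos (mul_pos hpi hq0) (show (0:ℝ) < 2*q^2+1 by positivity)]
  · have : 0 < q / (Real.pi * (q ^ 2 + 1) ^ 2) := by positivity
    linarith
  · have h3 : q / (Real.pi * (q ^ 2 + 1) ^ 2)
        = q * (q ^ 2 + 1) / (Real.pi * (q ^ 2 + 1) ^ 3) := by
      field_simp
    rw [h3, ← add_div, div_lt_div_iff₀ hP3 hP3]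
    nlinarith [mul_pos hP3 (show (0:ℝ) < 7*q^3 - 5*q by nlinarith)]
  · apply div_neg_of_neg_of_pos _ hP3
    have h1 : 0 < q ^ 2 - 1 := by nlinarith
    nlinarith [pow_pos h1 2]
end
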